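/- arXiv:1509.05234 — 2 statements merged into one kernel-verified Lean document; each statement's English description precedes it below -/
import Mathlib

section
/- Let d' : W₋₁ → W and d : W → W₁ be bounded linear maps of Hilbert spaces with d ∘ d' = 0, and let Δ = d* ∘ d + d' ∘ (d')*. Then the Hilbert space W decomposes as an orthogonal direct sum W = ker Δ ⊕ closure(range d') ⊕ (ker d)ᗮ. -/
open ContinuousLinearMap
open scoped ComplexInnerProductSpace

private lemma orth_closure {E : Type*} [NormedAddCommGroup E] [InnerProductSpace ℂ E]
    (K : Submodule ℂ E) : K.topologicalClosureᗮ = Kᗮ := by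
  ext x
  simp_rw [Submodule.mem_orthogonal']
  constructor
  · intro hh u hu
    exact hh u (Submodule.le_topologicalClosure K hu)
  · intro hh u hu
    have hle : K ≤ LinearMap.ker ((innerSL ℂ x : E →L[ℂ] ℂ) : E →ₗ[ℂ] ℂ) := fun v hv => hh v hv
    exact Submodule.topologicalClosure_minimal K hle (isClosed_ker (innerSL ℂ x)) hu

set_option maxHeartbeats 1000000 in
/-- Orthogonal decomposition `W = ker Δ ⊕ closure(range d') ⊕ (ker d)ᗮ`. -/
theorem laplacian_orthogonal_decomposition
    {Wm W W₁ : Type*}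
    [NormedAddCommGroup Wm] [InnerProductSpace ℂ Wm] [CompleteSpace Wm]
    [NormedAddCommGroup W] [InnerProductSpace ℂ W] [CompleteSpace W]
    [NormedAddCommGroup W₁] [InnerProductSpace ℂ W₁] [CompleteSpace W₁]
    (d : W →L[ℂ] W₁) (d' : Wm →L[ℂ] W)
    (h : d.comp d' = 0) :
    LinearMap.ker (((adjoint d).comp d + d'.comp (adjoint d') : W →L[ℂ] W) : W →ₗ[ℂ] W) ⟂
      (LinearMap.range (d' : Wm →ₗ[ℂ] W)).topologicalClosure ∧
    LinearMap.ker (((adjoint d).comp d + d'.comp (adjoint d') : W →L[ℂ] W) : W →ₗ[ℂ] W) ⟂ (LinearMap.ker (d : W →ₗ[ℂ] W₁))ᗮ ∧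
    (LinearMap.range (d' : Wm →ₗ[ℂ] W)).topologicalClosure ⟂ (LinearMap.ker (d : W →ₗ[ℂ] W₁))ᗮ ∧
    LinearMap.ker (((adjoint d).comp d + d'.comp (adjoint d') : W →L[ℂ] W) : W →ₗ[ℂ] W) ⊔
      (LinearMap.range (d' : Wm →ₗ[ℂ] W)).topologicalClosure ⊔ (LinearMap.ker (d : W →ₗ[ℂ] W₁))ᗮ = ⊤ := by
  set Δ := (adjoint d).comp d + d'.comp (adjoint d') with hΔ
  set R := (LinearMap.range (d' : Wm →ₗ[ℂ] W)).topologicalClosure with hR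
  -- characterization of ker Δ
  have hker : ∀ x : W, Δ x = 0 ↔ d x = 0 ∧ adjoint d' x = 0 := by
    intro x
    constructor
    · intro hx
      have h0 : ⟪x, Δ x⟫ = 0 := by rw [hx]; simp
      have h1 : ⟪d x, d x⟫ + ⟪adjoint d' x, adjoint d' x⟫ = 0 := by
        have e1 : ⟪d x, d x⟫ = ⟪x, adjoint d (d x)⟫ :=
          (ContinuousLinearMap.adjoint_inner_right d x (d x)).symm
        have e2 : ⟪adjoint d' x, adjoint d' x⟫ = ⟪x, d' (adjoint d' x)⟫ :=
          ContinuousLinearMap.adjoint_inner_left d' (adjoint d' x) x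
        rw [e1, e2, ← inner_add_right]
        rw [hΔ] at h0
        simpa [inner_add_right] using h0
      rw [inner_self_eq_norm_sq_to_K, inner_self_eq_norm_sq_to_K] at h1
      have h2 : (‖d x‖ : ℝ) ^ 2 + ‖adjoint d' x‖ ^ 2 = 0 := by
        have h3 : ((‖d x‖ ^ 2 + ‖adjoint d' x‖ ^ 2 : ℝ) : ℂ) = 0 := by push_cast; exact h1
        exact_mod_cast h3
      constructor
      · have : ‖d x‖ = 0 := by nlinarith [sq_nonneg ‖d x‖, sq_nonneg ‖adjoint d' x‖, norm_nonneg (d x), norm_nonneg (adjoint d' x)]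
        simpa using this
      · have : ‖adjoint d' x‖ = 0 := by nlinarith [norm_nonneg (d x), norm_nonneg (adjoint d' x)]
        simpa using this
    · rintro ⟨h1, h2⟩
      show Δ x = 0
      rw [hΔ]
      rw [ContinuousLinearMap.add_apply, ContinuousLinearMap.comp_apply,
        ContinuousLinearMap.comp_apply, h1, h2, map_zero, map_zero, add_zero]
  -- range d' ⊆ ker d, so closure too
  have hRker : R ≤ LinearMap.ker (d : W →ₗ[ℂ] W₁) := by
    rw [hR]
    have hle : LinearMap.range (d' : Wm →ₗ[ℂ] W) ≤ LinearMap.ker (d : W →ₗ[ℂ] W₁) := by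
      rintro x ⟨y, rfl⟩
      have := congrFun (congrArg DFunLike.coe h) y
      simpa using this
    exact Submodule.topologicalClosure_minimal (LinearMap.range (d' : Wm →ₗ[ℂ] W)) hle (isClosed_ker d)
  -- ker Δ ≤ Rᗮ
  have hkerR : LinearMap.ker (Δ : W →ₗ[ℂ] W) ≤ Rᗮ := by
    intro x hx
    rw [LinearMap.mem_ker] at hx
    have h2 := ((hker x).1 hx).2
    rw [hR, orth_closure]
    rw [Submodule.mem_orthogonal']
    rintro u ⟨y, rfl⟩
    change ⟪x, d' y⟫ = 0
    rw [← ContinuousLinearMap.adjoint_inner_left, h2, inner_zero_left]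
  have hkerd : LinearMap.ker (Δ : W →ₗ[ℂ] W) ≤ LinearMap.ker (d : W →ₗ[ℂ] W₁) := by
    intro x hx
    rw [LinearMap.mem_ker] at hx ⊢
    exact ((hker x).1 hx).1
  refine ⟨Submodule.isOrtho_iff_le.2 hkerR, ?_, ?_, ?_⟩
  · exact (Submodule.isOrtho_orthogonal_right _).mono_left hkerd
  · exact (Submodule.isOrtho_orthogonal_right _).mono_left hRker
  · -- sup = ⊤
    haveI : CompleteSpace R := (Submodule.isClosed_topologicalClosure _).completeSpace_coe
    have hsub : LinearMap.ker (d : W →ₗ[ℂ] W₁) ≤ LinearMap.ker (Δ : W →ₗ[ℂ] W) ⊔ R := by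
      intro x hx
      have hmem : x - (Submodule.orthogonalProjectionOnto R x : W) ∈ LinearMap.ker (Δ : W →ₗ[ℂ] W) := by
        rw [LinearMap.mem_ker, ContinuousLinearMap.coe_coe, hker]
        constructor
        · have h1 : d x = 0 := hx
          have h2 : d (Submodule.orthogonalProjectionOnto R x : W) = 0 := hRker (Submodule.orthogonalProjectionOnto R x).2
          simpa [map_sub, h1] using h2
        · have horth : x - (Submodule.orthogonalProjectionOnto R x : W) ∈ Rᗮ :=
            Submodule.sub_starProjection_mem_orthogonal (K := R) x
          refine ext_inner_left ℂ fun v => ?_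
          rw [ContinuousLinearMap.adjoint_inner_right, inner_zero_right]
          exact horth _ (Submodule.le_topologicalClosure _ ⟨v, rfl⟩)
      rw [← sub_add_cancel x (Submodule.orthogonalProjectionOnto R x : W)]
      exact Submodule.add_mem_sup hmem (Submodule.orthogonalProjectionOnto R x).2
    rw [eq_top_iff, ← Submodule.sup_orthogonal_of_hasOrthogonalProjection (K := LinearMap.ker (d : W →ₗ[ℂ] W₁))]
    exact sup_le (le_trans hsub le_sup_left) le_sup_right
end

section
/- In the 4-regular tree X (the Cayley graph of the free group F₂ of rank 2), the first ℓ²-cohomology is nonzero: there exists a nonzero square-summable function c on the edge set of X lying in the kernel of the adjoint d* of the coboundary operator d : ℓ²(V) → ℓ²(E), where d(f)(e) = f(e₊) − f(e₋) and d*(g)(v) = Σ_{e: e₊ = v} g(e) − Σ_{e: e₋ = v} g(e). -/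
open FreeGroup ENNReal

namespace TreeHarm

abbrev V := FreeGroup (Fin 2)
abbrev Ltr := Fin 2 × Bool

/-- word length -/
def n (v : V) : ℕ := v.toWord.length

/-- flow value on the edge from the parent of `v` to `v` (for `v ≠ 1`). -/
noncomputable def phi (v : V) : ℝ :=
  if v.toWord.head? = some ((0 : Fin 2), true) then (3: ℝ)⁻¹ ^ (n v - 1)
  else -(3 : ℝ)⁻¹ ^ n v

noncomputable def c (e : V × Fin 2) : ℂ :=
  if n (e.1 * FreeGroup.of e.2) = n e.1 + 1 then (phi (e.1 * FreeGroup.of e.2) : ℂ)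
  else -(phi e.1 : ℂ)

/-- reducedness as a chain condition -/
def Rd (l : List Ltr) : Prop := List.Chain' (fun a b => ¬(a.1 = b.1 ∧ a.2 = !b.2)) l

lemma reduce_eq_self_of_rd : ∀ {l : List Ltr}, Rd l → FreeGroup.reduce l = l := by
  intro l h
  induction l with
  | nil => rfl
  | cons x tl ih =>
    rw [FreeGroup.reduce.cons, ih h.tail]
    cases tl with
    | nil => rfl
    | cons hd2 tl2 =>
      have : ¬(x.1 = hd2.1 ∧ x.2 = !hd2.2) := (List.isChain_cons_cons.mp h).1
      simp only [if_neg this]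

lemma rd_reduce (l : List Ltr) : Rd (FreeGroup.reduce l) := by
  induction l with
  | nil => exact List.isChain_nil
  | cons x tl ih =>
    rw [FreeGroup.reduce.cons]
    rcases h : FreeGroup.reduce tl with _ | ⟨hd2, tl2⟩
    · exact List.isChain_singleton x
    · rw [h] at ih
      by_cases hc : x.1 = hd2.1 ∧ x.2 = !hd2.2
      · simp only [if_pos hc]; exact ih.tail
      · simp only [if_neg hc]
        exact List.isChain_cons_cons.mpr ⟨hc, ih⟩

lemma rd_toWord (v : V) : Rd v.toWord := by
  have := rd_reduce v.toWord
  rwa [FreeGroup.reduce_toWord] at this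

lemma mk_cancel (w' : List Ltr) (a : Fin 2) (b : Bool) :
    FreeGroup.mk (w' ++ [(a, b), (a, !b)]) = FreeGroup.mk w' := by
  have h : FreeGroup.mk (w' ++ (a, b) :: (a, !b) :: []) = FreeGroup.mk (w' ++ []) :=
    Quot.sound (@FreeGroup.Red.Step.not (Fin 2) w' [] a b)
  simpa [FreeGroup.quot_mk_eq_mk] using h

lemma parent_case (v : V) (x : Ltr) (w' : List Ltr) (h : v.toWord = w' ++ [(x.1, !x.2)]) :
    (v * FreeGroup.mk [x]).toWord = w' := by
  have hv : FreeGroup.mk v.toWord = v := FreeGroup.mk_toWord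
  have hmul : v * FreeGroup.mk [x] = FreeGroup.mk w' := by
    calc v * FreeGroup.mk [x] = FreeGroup.mk (v.toWord) * FreeGroup.mk [x] := by rw [hv]
    _ = FreeGroup.mk (v.toWord ++ [x]) := FreeGroup.mul_mk
    _ = FreeGroup.mk (w' ++ [(x.1, !x.2), (x.1, !(!x.2))]) := by rw [h]; simp
    _ = FreeGroup.mk w' := mk_cancel w' x.1 (!x.2)
  have hrd : Rd w' := by
    have := rd_toWord v
    rw [h] at this
    exact (List.isChain_append.mp this).1
  rw [hmul, FreeGroup.toWord_mk, reduce_eq_self_of_rd hrd]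

lemma child_case (v : V) (x : Ltr) (hne : v.toWord.getLast? ≠ some (x.1, !x.2)) :
    (v * FreeGroup.mk [x]).toWord = v.toWord ++ [x] := by
  have hv : FreeGroup.mk v.toWord = v := FreeGroup.mk_toWord
  have hmul : v * FreeGroup.mk [x] = FreeGroup.mk (v.toWord ++ [x]) := by
    calc v * FreeGroup.mk [x] = FreeGroup.mk (v.toWord) * FreeGroup.mk [x] := by rw [hv]
    _ = FreeGroup.mk (v.toWord ++ [x]) := FreeGroup.mul_mk
  have hrd : Rd (v.toWord ++ [x]) := by
    rcases List.eq_nil_or_concat v.toWord with hnil | ⟨w', y, hy⟩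
    · rw [hnil]; exact List.isChain_singleton x
    · rw [List.concat_eq_append] at hy
      rw [hy]
      refine List.isChain_append.mpr ⟨?_, List.isChain_singleton x, ?_⟩
      · have := rd_toWord v; rw [hy] at this; exact this
      · intro a ha b hb
        simp only [List.getLast?_concat, Option.mem_def, Option.some.injEq] at ha
        simp only [List.head?_cons, Option.mem_def, Option.some.injEq] at hb
        subst hb
        rcases ha with rfl | rfl <;> try skip
        rintro ⟨h1, h2⟩
        apply hne
        rw [hy, List.getLast?_concat]
        congr 1
        exact Prod.ext h1 h2
  rw [hmul, FreeGroup.toWord_mk, reduce_eq_self_of_rd hrd]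


lemma toWord_ne_nil {v : V} (hv : v ≠ 1) : v.toWord ≠ [] := by
  simpa [FreeGroup.toWord_eq_nil_iff] using hv

lemma phi_succ {u v : V} {x : Ltr} (hu : u.toWord = v.toWord ++ [x])
    (hv : v.toWord ≠ []) : phi u = phi v / 3 := by
  have hn : n u = n v + 1 := by simp [n, hu]
  have hh : u.toWord.head? = v.toWord.head? := by
    rw [hu, List.head?_append_of_ne_nil _ hv]
  unfold phi
  rw [hh, hn]
  have h1 : 1 ≤ n v := List.length_pos_iff.mpr hv
  by_cases hb : v.toWord.head? = some ((0 : Fin 2), true)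
  · rw [if_pos hb, if_pos hb]
    have h2 : n v + 1 - 1 = (n v - 1) + 1 := by omega
    rw [h2, pow_succ]
    ring
  · rw [if_neg hb, if_neg hb, pow_succ]
    ring

lemma of_eq (i : Fin 2) : FreeGroup.of i = FreeGroup.mk [(i, true)] := rfl

lemma inv_of_eq (i : Fin 2) : (FreeGroup.of i)⁻¹ = FreeGroup.mk [(i, false)] := by
  rw [of_eq, FreeGroup.inv_mk]
  simp [FreeGroup.invRev]

lemma c_self_child (v : V) (i : Fin 2) (h : v.toWord.getLast? ≠ some (i, false))
    (hv : v ≠ 1) : c (v, i) = ((phi v / 3 : ℝ) : ℂ) := by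
  have hx : (v * FreeGroup.mk [((i : Fin 2), true)]).toWord = v.toWord ++ [(i, true)] :=
    child_case v (i, true) (by simpa using h)
  rw [← of_eq] at hx
  have hn : n (v * FreeGroup.of i) = n v + 1 := by simp [n, hx]
  rw [c]
  simp only [if_pos hn]
  rw [phi_succ hx (toWord_ne_nil hv)]

lemma c_self_parent (v : V) (i : Fin 2) (w' : List Ltr) (h : v.toWord = w' ++ [(i, false)]) :
    c (v, i) = -((phi v : ℝ) : ℂ) := by
  have hx : (v * FreeGroup.mk [((i : Fin 2), true)]).toWord = w' :=
    parent_case v (i, true) w' (by simpa using h)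
  rw [← of_eq] at hx
  have hn : ¬ (n (v * FreeGroup.of i) = n v + 1) := by
    simp only [n, hx, h, List.length_append]
    simp only [List.length_cons, List.length_nil]
    omega
  rw [c]
  simp only [if_neg hn]

lemma c_nbr_child (v : V) (i : Fin 2) (h : v.toWord.getLast? ≠ some (i, true))
    (hv : v ≠ 1) : c (v * (FreeGroup.of i)⁻¹, i) = -((phi v / 3 : ℝ) : ℂ) := by
  have hx : (v * FreeGroup.mk [((i : Fin 2), false)]).toWord = v.toWord ++ [(i, false)] :=
    child_case v (i, false) (by simpa using h)
  rw [← inv_of_eq] at hx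
  have hmul : (v * (FreeGroup.of i)⁻¹) * FreeGroup.of i = v := inv_mul_cancel_right v _
  have hn : ¬ (n ((v * (FreeGroup.of i)⁻¹) * FreeGroup.of i) = n (v * (FreeGroup.of i)⁻¹) + 1) := by
    rw [hmul]
    simp only [n, hx, List.length_append]
    simp only [List.length_cons, List.length_nil]
    omega
  rw [c]
  simp only [if_neg hn]
  rw [phi_succ hx (toWord_ne_nil hv)]

lemma c_nbr_parent (v : V) (i : Fin 2) (w' : List Ltr) (h : v.toWord = w' ++ [(i, true)]) :
    c (v * (FreeGroup.of i)⁻¹, i) = ((phi v : ℝ) : ℂ) := by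
  have hx : (v * FreeGroup.mk [((i : Fin 2), false)]).toWord = w' :=
    parent_case v (i, false) w' (by simpa using h)
  rw [← inv_of_eq] at hx
  have hmul : (v * (FreeGroup.of i)⁻¹) * FreeGroup.of i = v := inv_mul_cancel_right v _
  have hn : n ((v * (FreeGroup.of i)⁻¹) * FreeGroup.of i) = n (v * (FreeGroup.of i)⁻¹) + 1 := by
    rw [hmul]
    simp only [n, hx, h, List.length_append]
    simp only [List.length_cons, List.length_nil]
  rw [c]
  rw [hmul] at hn
  simp only [hmul, if_pos hn]


lemma toWord_inv_of (i : Fin 2) : ((FreeGroup.of i)⁻¹ : V).toWord = [(i, false)] := by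
  rw [inv_of_eq, FreeGroup.toWord_mk, FreeGroup.reduce_singleton]

lemma phi_inv_of (i : Fin 2) : phi ((FreeGroup.of i)⁻¹) = -(3 : ℝ)⁻¹ := by
  rw [phi]
  have h : ((FreeGroup.of i)⁻¹ : V).toWord.head? ≠ some ((0 : Fin 2), true) := by
    rw [toWord_inv_of]; simp
  rw [if_neg h]
  simp [n, toWord_inv_of]

lemma phi_of_zero : phi (FreeGroup.of (0 : Fin 2)) = 1 := by
  rw [phi]
  have h : (FreeGroup.of (0 : Fin 2)).toWord.head? = some ((0 : Fin 2), true) := by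
    rw [FreeGroup.toWord_of]; rfl
  rw [if_pos h]
  simp [n, FreeGroup.toWord_of]

lemma phi_of_one : phi (FreeGroup.of (1 : Fin 2)) = -(3 : ℝ)⁻¹ := by
  rw [phi]
  have h : (FreeGroup.of (1 : Fin 2)).toWord.head? ≠ some ((0 : Fin 2), true) := by
    rw [FreeGroup.toWord_of]; simp
  rw [if_neg h]
  simp [n, FreeGroup.toWord_of]

lemma c_one_nbr (i : Fin 2) : c ((1 : V) * (FreeGroup.of i)⁻¹, i) = ((3 : ℝ)⁻¹ : ℂ) := by
  have hmul : (FreeGroup.of i)⁻¹ * FreeGroup.of i = (1 : V) := inv_mul_cancel _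
  have hn : ¬ (n ((FreeGroup.of i)⁻¹ * FreeGroup.of i) = n ((FreeGroup.of i)⁻¹ : V) + 1) := by
    rw [hmul]
    simp [n, FreeGroup.toWord_one, toWord_inv_of]
  rw [one_mul]
  simp only [c]
  rw [if_neg hn, phi_inv_of]
  push_cast
  ring

lemma c_one_self (i : Fin 2) : c ((1 : V), i) = ((phi (FreeGroup.of i) : ℝ) : ℂ) := by
  have hn : n ((1 : V) * FreeGroup.of i) = n (1 : V) + 1 := by
    rw [one_mul]
    simp [n, FreeGroup.toWord_one, FreeGroup.toWord_of]
  simp only [c]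
  rw [if_pos hn, one_mul]

lemma harmonic (v : V) :
    (∑ i : Fin 2, c (v * (FreeGroup.of i)⁻¹, i)) - ∑ i : Fin 2, c (v, i) = 0 := by
  rcases eq_or_ne v 1 with rfl | hv
  · rw [Fin.sum_univ_two, Fin.sum_univ_two, c_one_nbr, c_one_nbr, c_one_self, c_one_self,
      phi_of_zero, phi_of_one]
    push_cast
    ring
  · obtain ⟨w', y, hy⟩ : ∃ w' y, v.toWord = w' ++ [y] := by
      rcases List.eq_nil_or_concat v.toWord with hnil | ⟨w', y, h⟩
      · exact absurd hnil (toWord_ne_nil hv)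
      · exact ⟨w', y, by simpa [List.concat_eq_append] using h⟩
    have hlast : v.toWord.getLast? = some y := by rw [hy, List.getLast?_concat]
    have hne : ∀ z : Ltr, z ≠ y → v.toWord.getLast? ≠ some z := by
      intro z hz hc
      rw [hlast] at hc
      exact hz (Option.some.inj hc).symm
    obtain ⟨j, b⟩ := y
    rw [Fin.sum_univ_two, Fin.sum_univ_two]
    fin_cases j <;> cases b
    · -- y = (0, false) : parent via c_self_parent at i = 0
      rw [c_nbr_child v 0 (hne _ (by decide)) hv, c_nbr_child v 1 (hne _ (by decide)) hv,
        c_self_parent v 0 w' hy, c_self_child v 1 (hne _ (by decide)) hv]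
      push_cast
      ring
    · -- y = (0, true)
      rw [c_nbr_parent v 0 w' hy, c_nbr_child v 1 (hne _ (by decide)) hv,
        c_self_child v 0 (hne _ (by decide)) hv, c_self_child v 1 (hne _ (by decide)) hv]
      push_cast
      ring
    · -- y = (1, false)
      rw [c_nbr_child v 0 (hne _ (by decide)) hv, c_nbr_child v 1 (hne _ (by decide)) hv,
        c_self_child v 0 (hne _ (by decide)) hv, c_self_parent v 1 w' hy]
      push_cast
      ring
    · -- y = (1, true)
      rw [c_nbr_child v 0 (hne _ (by decide)) hv, c_nbr_parent v 1 w' hy,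
        c_self_child v 0 (hne _ (by decide)) hv, c_self_child v 1 (hne _ (by decide)) hv]
      push_cast
      ring


def listEquiv : (Σ m : ℕ, List.Vector Ltr m) ≃ List Ltr :=
  Equiv.sigmaFiberEquiv (fun l : List Ltr => l.length)

lemma listEquiv_apply (m : ℕ) (l : List.Vector Ltr m) : listEquiv ⟨m, l⟩ = l.1 := rfl

lemma summable_lists :
    Summable (fun l : List Ltr => ((9 : ℝ)⁻¹) ^ l.length) := by
  rw [← listEquiv.summable_iff]
  have hnn : ∀ x : (Σ m : ℕ, List.Vector Ltr m),
      0 ≤ ((9 : ℝ)⁻¹) ^ ((listEquiv x).length) := fun x => by positivity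
  apply (summable_sigma_of_nonneg hnn).mpr
  constructor
  · intro m
    exact Summable.of_finite
  · have key : ∀ m : ℕ, (∑' l : List.Vector Ltr m,
        ((9:ℝ)⁻¹) ^ ((listEquiv ⟨m, l⟩).length)) = (4 * 9⁻¹ : ℝ) ^ m := by
      intro m
      have h1 : ∀ l : List.Vector Ltr m,
          ((9:ℝ)⁻¹) ^ ((listEquiv ⟨m, l⟩).length) = ((9:ℝ)⁻¹) ^ m := by
        intro l
        rw [listEquiv_apply]
        congr 1
        exact l.2
      rw [tsum_congr h1, tsum_fintype, Finset.sum_const, Finset.card_univ, card_vector,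
        nsmul_eq_mul, mul_pow]
      have hcard : (Fintype.card Ltr : ℝ) = 4 := by
        simp only [Fintype.card_prod, Fintype.card_fin, Fintype.card_bool]
        norm_num
      push_cast
      rw [show ((Fintype.card Ltr : ℝ)) = 4 from hcard]
    rw [funext fun m => key m]
    exact summable_geometric_of_lt_one (by norm_num) (by norm_num)

lemma summable_V : Summable (fun v : V => ((9 : ℝ)⁻¹) ^ n v) :=
  summable_lists.comp_injective FreeGroup.toWord_injective

lemma abs_phi_le (u : V) : |phi u| ≤ (3⁻¹ : ℝ) ^ (n u - 1) := by
  rw [phi]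
  split
  · rw [abs_of_nonneg (by positivity)]
  · rw [abs_neg, abs_of_nonneg (by positivity)]
    exact pow_le_pow_of_le_one (by norm_num) (by norm_num) (Nat.sub_le _ _)

lemma norm_c_le (e : V × Fin 2) : ‖c e‖ ≤ 3 * (3⁻¹ : ℝ) ^ (n e.1) := by
  obtain ⟨v, i⟩ := e
  simp only [c]
  split
  · next h =>
    rw [Complex.norm_real]
    calc |phi (v * FreeGroup.of i)| ≤ (3⁻¹ : ℝ) ^ (n (v * FreeGroup.of i) - 1) := abs_phi_le _
    _ = (3⁻¹ : ℝ) ^ (n v) := by rw [h]; norm_num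
    _ ≤ 3 * (3⁻¹ : ℝ) ^ (n v) := by nlinarith [pow_nonneg (by norm_num : (0:ℝ) ≤ 3⁻¹) (n v)]
  · rw [norm_neg, Complex.norm_real]
    calc |phi v| ≤ (3⁻¹ : ℝ) ^ (n v - 1) := abs_phi_le _
    _ ≤ 3 * (3⁻¹ : ℝ) ^ (n v) := by
        rcases Nat.eq_zero_or_pos (n v) with h0 | h0
        · rw [h0]; norm_num
        · have : n v = (n v - 1) + 1 := by omega
          rw [this]
          simp only [Nat.add_sub_cancel, pow_succ]
          nlinarith [pow_nonneg (by norm_num : (0:ℝ) ≤ 3⁻¹) (n v - 1)]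

lemma memlp_c : Memℓp c 2 := by
  apply memℓp_gen
  have h2 : (2 : ℝ≥0∞).toReal = 2 := by norm_num
  rw [h2]
  apply Summable.of_nonneg_of_le (fun e => by positivity)
    (f := fun e : V × Fin 2 => 9 * (9⁻¹ : ℝ) ^ (n e.1))
  · intro e
    have h1 : ‖c e‖ ^ (2 : ℝ) = ‖c e‖ ^ (2 : ℕ) := by
      rw [← Real.rpow_natCast]; norm_num
    rw [h1]
    calc ‖c e‖ ^ (2:ℕ) ≤ (3 * (3⁻¹ : ℝ) ^ (n e.1)) ^ (2:ℕ) := by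
          apply pow_le_pow_left₀ (norm_nonneg _) (norm_c_le e)
    _ = 9 * (9⁻¹ : ℝ) ^ (n e.1) := by
          rw [mul_pow, ← pow_mul, mul_comm (n e.1) 2, pow_mul]
          norm_num
  · apply (summable_prod_of_nonneg (fun e => by positivity)).mpr
    constructor
    · intro v
      exact Summable.of_finite
    · have key : ∀ v : V, (∑' _ : Fin 2, 9 * (9⁻¹ : ℝ) ^ (n v)) = 18 * (9⁻¹ : ℝ) ^ (n v) := by
        intro v
        rw [tsum_fintype, Finset.sum_const, Finset.card_univ, Fintype.card_fin, nsmul_eq_mul]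
        push_cast
        ring
      rw [funext fun v => key v]
      exact (summable_V.mul_left 18)

end TreeHarm


/-- Nonvanishing of first reduced `ℓ²`-cohomology of the 4-regular tree (the Cayley
graph of the free group `F₂`): there is a nonzero square-summable function on the
edge set lying in the kernel of `d*`, i.e. a nonzero harmonic `ℓ²` 1-cochain.
Vertices: `V = F₂`; oriented edges: `E = V × Fin 2`, the edge `(v, i)` starting at
`v` and ending at `v * of i`.  The condition `d* c = 0` reads: for every vertex `v`,
the sum of `c` over edges ending at `v` minus the sum over edges starting at `v`
vanishes. -/
theorem tree_harmonic_one_cochain_nonzero :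
    ∃ c : lp (fun _ : FreeGroup (Fin 2) × Fin 2 => ℂ) 2,
      c ≠ 0 ∧
      ∀ v : FreeGroup (Fin 2),
        (∑ i : Fin 2, (c : FreeGroup (Fin 2) × Fin 2 → ℂ) (v * (FreeGroup.of i)⁻¹, i)) -
          (∑ i : Fin 2, (c : FreeGroup (Fin 2) × Fin 2 → ℂ) (v, i)) = 0 := by
  refine ⟨⟨TreeHarm.c, TreeHarm.memlp_c⟩, ?_, ?_⟩
  · intro h
    have h1 : TreeHarm.c ((1 : FreeGroup (Fin 2)), (0 : Fin 2)) = 0 := by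
      have h2 := congrArg (fun f : lp (fun _ : FreeGroup (Fin 2) × Fin 2 => ℂ) 2 =>
        (f : FreeGroup (Fin 2) × Fin 2 → ℂ) (1, 0)) h
      simpa [lp.coeFn_zero] using h2
    rw [TreeHarm.c_one_self, TreeHarm.phi_of_zero] at h1
    simp at h1
  · intro v
    exact TreeHarm.harmonic v
end
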